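/- Fix ε > 0. Let n be a positive integer, let 0 ≤ l₁ < l₂ < ⋯ < l_k ≤ n and m₀ be integers with l_i ≢ l_j (mod m₀) for i ≠ j. Let f ∈ ℤ[X] have degree ≤ n with f ∉ M = ℤX^{l₁} + ⋯ + ℤX^{l_k}. Then there exists an odd prime q < c·n^{1/2+ε} (c an absolute constant depending on ε) such that f ∉ M + I_q, where I_q = ⟨X^{lcm(q, m₀)} − 1⟩ ⊆ ℤ[X]. -/

import Mathlib

open Finset Nat Polynomial Filter

lemma sum_range_card_le (T : Finset ℕ) : ∑ i ∈ Finset.range T.card, i ≤ ∑ q ∈ T, q := by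
  induction T using Finset.strongInduction with
  | _ T ih =>
    rcases T.eq_empty_or_nonempty with rfl | hne
    · simp
    · have hM : T.max' hne ∈ T := T.max'_mem hne
      have hcard : T.card ≤ T.max' hne + 1 := by
        have hsub : T ⊆ Finset.range (T.max' hne + 1) := by
          intro x hx
          exact Finset.mem_range.2 (Nat.lt_succ_of_le (T.le_max' x hx))
        simpa using Finset.card_le_card hsub
      have hsub := ih (T.erase (T.max' hne)) (Finset.erase_ssubset hM)
      have hce : (T.erase (T.max' hne)).card = T.card - 1 := Finset.card_erase_of_mem hM
      have hc1 : 1 ≤ T.card := Finset.card_pos.2 hne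
      rw [hce] at hsub
      have e1 : ∑ i ∈ Finset.range T.card, i
          = (∑ i ∈ Finset.range (T.card - 1), i) + (T.card - 1) := by
        conv_lhs => rw [show T.card = (T.card - 1) + 1 by omega]
        rw [Finset.sum_range_succ]
      have e2 : ∑ q ∈ T, q = T.max' hne + ∑ q ∈ T.erase (T.max' hne), q :=
        (Finset.add_sum_erase T id hM).symm
      omega

lemma chebyshev_count (u : ℕ) (hu : 4 ≤ u) :
    2 * u ≤ (((Finset.range (2 * u + 1)).filter Nat.Prime).card + 1) * (Nat.clog 2 (2 * u + 1)) := by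
  set P := (Finset.range (2 * u + 1)).filter Nat.Prime with hP
  set b := Nat.clog 2 (2 * u + 1) with hb
  have hC : Nat.centralBinom u ≤ (2 * u + 1) ^ P.card := by
    have h1 : (∏ p ∈ Finset.range (2 * u + 1), p ^ (Nat.centralBinom u).factorization p)
        = Nat.centralBinom u := Nat.prod_pow_factorization_centralBinom u
    have h2 : (∏ p ∈ Finset.range (2 * u + 1), p ^ (Nat.centralBinom u).factorization p)
        = ∏ p ∈ P, p ^ (Nat.centralBinom u).factorization p := by
      rw [hP]
      refine (Finset.prod_filter_of_ne ?_).symm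
      intro p _ hne
      by_contra hnp
      exact hne (by rw [Nat.factorization_eq_zero_of_not_prime _ hnp, pow_zero])
    have h3 : ∀ p ∈ P, p ^ (Nat.centralBinom u).factorization p ≤ 2 * u + 1 := by
      intro p _
      have := Nat.pow_factorization_choose_le (p := p) (n := 2 * u) (k := u) (by omega)
      rw [Nat.centralBinom]
      omega
    calc Nat.centralBinom u = ∏ p ∈ P, p ^ (Nat.centralBinom u).factorization p := by
          exact (h1.symm.trans h2)
      _ ≤ (2 * u + 1) ^ P.card := Finset.prod_le_pow_card _ _ _ h3
  have h4 : 4 ^ u ≤ (2 * u + 1) ^ (P.card + 1) := by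
    have := Nat.four_pow_lt_mul_centralBinom u hu
    calc 4 ^ u ≤ (2 * u + 1) * Nat.centralBinom u := by nlinarith [Nat.centralBinom_pos u]
      _ ≤ (2 * u + 1) * (2 * u + 1) ^ P.card := by
          exact Nat.mul_le_mul_left _ hC
      _ = (2 * u + 1) ^ (P.card + 1) := by ring
  have h5 : (2 : ℕ) ^ (2 * u) ≤ 2 ^ (b * (P.card + 1)) := by
    calc (2:ℕ) ^ (2 * u) = 4 ^ u := by rw [pow_mul]; norm_num
      _ ≤ (2 * u + 1) ^ (P.card + 1) := h4
      _ ≤ (2 ^ b) ^ (P.card + 1) :=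
          Nat.pow_le_pow_left (Nat.le_pow_clog one_lt_two _) _
      _ = 2 ^ (b * (P.card + 1)) := by rw [← pow_mul]
  have := (Nat.pow_le_pow_iff_right (one_lt_two)).1 h5
  calc 2 * u ≤ b * (P.card + 1) := this
    _ = (P.card + 1) * b := Nat.mul_comm _ _

lemma roots_degree_bound (n : ℕ) (h : Polynomial ℤ) (hh : h ≠ 0) (hdeg : h.natDegree ≤ n)
    (S : Finset ℕ) (hSp : ∀ q ∈ S, Nat.Prime q) (d : ℕ → ℕ)
    (hd : ∀ q ∈ S, q ∣ d q)
    (hdvd : ∀ q ∈ S, ((Polynomial.X : Polynomial ℤ) ^ (d q) - 1) ∣ h) :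
    ∑ q ∈ S, (q - 1) ≤ n := by
  set H : Polynomial ℂ := h.map (Int.castRingHom ℂ) with hH
  have hHne : H ≠ 0 := by
    rw [hH, Ne, Polynomial.map_eq_zero_iff (RingHom.injective_int _)]
    exact hh
  have hHdeg : H.natDegree ≤ n := le_trans Polynomial.natDegree_map_le hdeg
  set Z : Finset ℂ := S.biUnion (fun q => primitiveRoots q ℂ) with hZ
  have hdisj : ∀ q ∈ S, ∀ q' ∈ S, q ≠ q' →
      Disjoint (primitiveRoots q ℂ) (primitiveRoots q' ℂ) := by
    intro q hq q' hq' hne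
    rw [Finset.disjoint_left]
    intro ζ h1 h2
    have p1 := isPrimitiveRoot_of_mem_primitiveRoots h1
    have p2 := isPrimitiveRoot_of_mem_primitiveRoots h2
    exact hne (p1.unique p2)
  have hcard : Z.card = ∑ q ∈ S, (q - 1) := by
    rw [hZ, Finset.card_biUnion hdisj]
    refine Finset.sum_congr rfl fun q hq => ?_
    rw [Complex.card_primitiveRoots, Nat.totient_prime (hSp q hq)]
  have hsubset : Z ⊆ H.roots.toFinset := by
    intro ζ hζ
    rw [hZ, Finset.mem_biUnion] at hζ
    obtain ⟨q, hq, hζq⟩ := hζ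
    have hprim := isPrimitiveRoot_of_mem_primitiveRoots hζq
    obtain ⟨t, ht⟩ := hd q hq
    have hpow : ζ ^ (d q) = 1 := by
      rw [ht, pow_mul, hprim.pow_eq_one, one_pow]
    obtain ⟨w, hw⟩ := hdvd q hq
    have hroot : H.IsRoot ζ := by
      rw [hH, hw, Polynomial.map_mul, Polynomial.IsRoot, Polynomial.eval_mul,
        Polynomial.map_sub, Polynomial.map_pow, Polynomial.map_X, Polynomial.map_one,
        Polynomial.eval_sub, Polynomial.eval_pow, Polynomial.eval_X, Polynomial.eval_one,
        hpow, sub_self, zero_mul]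
    rw [Multiset.mem_toFinset, Polynomial.mem_roots']
    exact ⟨hHne, hroot⟩
  calc ∑ q ∈ S, (q - 1) = Z.card := hcard.symm
    _ ≤ H.roots.toFinset.card := Finset.card_le_card hsubset
    _ ≤ Multiset.card H.roots := Multiset.toFinset_card_le _
    _ ≤ H.natDegree := Polynomial.card_roots' H
    _ ≤ n := hHdeg

lemma span_inj (m : ℕ) (k : ℕ) (l : Fin k → ℕ)
    (hinj : Function.Injective fun i => ((l i : ℤ) : ZMod m))
    (p : Polynomial ℤ)
    (hp : p ∈ Submodule.span ℤ (Set.range fun i => (Polynomial.X : Polynomial ℤ) ^ (l i)))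
    (hdvd : ((Polynomial.X : Polynomial ℤ) ^ m - 1) ∣ p) : p = 0 := by
  obtain ⟨c, hc⟩ := (Submodule.mem_span_range_iff_exists_fun (R := ℤ)).1 hp
  set A := AddMonoidAlgebra ℤ (ZMod m) with hA
  set x : A := AddMonoidAlgebra.single (1 : ZMod m) (1 : ℤ) with hx
  have hxpow : ∀ a : ℕ, x ^ a = AddMonoidAlgebra.single ((a : ℤ) : ZMod m) (1 : ℤ) := by
    intro a
    rw [hx, AddMonoidAlgebra.single_pow, one_pow, nsmul_eq_mul, mul_one]
    norm_cast
  have hxm : x ^ m = 1 := by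
    rw [hxpow m, AddMonoidAlgebra.one_def]
    congr 1
    push_cast
    exact ZMod.natCast_self m
  have hev : Polynomial.aeval x p = 0 := by
    obtain ⟨w, hw⟩ := hdvd
    rw [hw, map_mul, map_sub, map_pow, Polynomial.aeval_X, map_one, hxm, sub_self, zero_mul]
  rw [← hc] at hev
  rw [map_sum] at hev
  have hev' : ∑ i : Fin k, AddMonoidAlgebra.single ((l i : ℤ) : ZMod m) (c i) = 0 := by
    rw [← hev]
    refine Finset.sum_congr rfl fun i _ => ?_
    rw [map_smul, map_pow, Polynomial.aeval_X, hxpow (l i), AddMonoidAlgebra.smul_single]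
    simp
  have hc0 : ∀ j, c j = 0 := by
    intro j
    have e : ∀ i : Fin k, (AddMonoidAlgebra.single ((l i : ℤ) : ZMod m) (c i) :
        AddMonoidAlgebra ℤ (ZMod m)).coeff (((l j : ℤ) : ZMod m)) = if i = j then c i else 0 := by
      intro i
      rw [AddMonoidAlgebra.coeff_single, Finsupp.single_apply]
      by_cases hij : i = j
      · subst hij; simp
      · rw [if_neg hij, if_neg (fun hcast => hij (hinj hcast))]
    have happ := congrArg (fun F : A => F.coeff (((l j : ℤ) : ZMod m))) hev'
    simp only [AddMonoidAlgebra.coeff_zero, Finsupp.coe_zero, Pi.zero_apply] at happ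
    rw [AddMonoidAlgebra.coeff_sum, Finsupp.finset_sum_apply] at happ
    rw [Finset.sum_congr rfl (fun i _ => e i), Finset.sum_ite_eq' Finset.univ j c] at happ
    simpa using happ
  rw [← hc]
  simp [hc0]

lemma span_natDegree_le (n k : ℕ) (l : Fin k → ℕ) (hl : ∀ i, l i ≤ n) (g : Polynomial ℤ)
    (hg : g ∈ Submodule.span ℤ (Set.range fun i => (Polynomial.X : Polynomial ℤ) ^ (l i))) :
    g.natDegree ≤ n := by
  have hsub : Submodule.span ℤ (Set.range fun i => (Polynomial.X : Polynomial ℤ) ^ (l i))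
      ≤ Polynomial.degreeLE ℤ (n : WithBot ℕ) := by
    rw [Submodule.span_le]
    rintro _ ⟨i, rfl⟩
    rw [SetLike.mem_coe, Polynomial.mem_degreeLE, Polynomial.degree_X_pow]
    exact_mod_cast hl i
  have := hsub hg
  rw [Polynomial.mem_degreeLE] at this
  exact Polynomial.natDegree_le_iff_degree_le.2 this

lemma not_mem_sup_of_big (n k : ℕ) (l : Fin k → ℕ) (hl : ∀ i, l i ≤ n) (f : Polynomial ℤ)
    (hf : f.natDegree ≤ n)
    (hfM : f ∉ Submodule.span ℤ (Set.range fun i => (Polynomial.X : Polynomial ℤ) ^ (l i)))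
    (L : ℕ) (hL : n < L) :
    f ∉ Submodule.span ℤ (Set.range fun i => (Polynomial.X : Polynomial ℤ) ^ (l i)) ⊔
      (Ideal.span {(Polynomial.X : Polynomial ℤ) ^ L - 1}).restrictScalars ℤ := by
  intro hmem
  rw [Submodule.mem_sup] at hmem
  obtain ⟨g, hg, h, hh, hgh⟩ := hmem
  rw [Submodule.restrictScalars_mem, Ideal.mem_span_singleton] at hh
  obtain ⟨w, hw⟩ := hh
  rcases eq_or_ne w 0 with rfl | hw0
  · rw [mul_zero] at hw
    subst hw
    rw [add_zero] at hgh
    exact hfM (hgh ▸ hg)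
  · have hL0 : 0 < L := by omega
    have hXL : ((Polynomial.X : Polynomial ℤ) ^ L - 1) ≠ 0 := by
      have := Polynomial.X_pow_sub_C_ne_zero (R := ℤ) hL0 1
      simpa using this
    have hdegXL : ((Polynomial.X : Polynomial ℤ) ^ L - 1).natDegree = L := by
      have := Polynomial.natDegree_X_pow_sub_C (R := ℤ) (n := L) (r := 1)
      simpa using this
    have hdegh : h.natDegree = L + w.natDegree := by
      rw [hw, Polynomial.natDegree_mul hXL hw0, hdegXL]
    have hgdeg : g.natDegree ≤ n := span_natDegree_le n k l hl g hg
    have hhdeg : h.natDegree ≤ n := by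
      have : h = f - g := by rw [← hgh]; ring
      rw [this]
      exact le_trans (Polynomial.natDegree_sub_le f g) (by omega)
    omega

lemma eventually_real_bound (ε : ℝ) (hε : 0 < ε) :
    ∀ᶠ x : ℝ in atTop,
      12 * (Real.sqrt x + 5) * (Real.logb 2 (x + 1) + 7) < x ^ ((1 : ℝ) / 2 + ε) := by
  have hlog := (isLittleO_log_rpow_atTop hε).def (by norm_num : (0:ℝ) < 1/1000)
  have hpow := (tendsto_rpow_atTop hε).eventually_ge_atTop 400
  filter_upwards [hlog, hpow, eventually_ge_atTop (625 : ℝ)] with x hl hp hx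
  have hx0 : (0 : ℝ) < x := by linarith
  have hs : Real.sqrt x ≥ 25 := by
    have h625 : Real.sqrt 625 = 25 := by
      rw [show (625:ℝ) = 25^2 by norm_num, Real.sqrt_sq (by norm_num)]
    calc (25:ℝ) = Real.sqrt 625 := h625.symm
      _ ≤ Real.sqrt x := Real.sqrt_le_sqrt hx
  have hs0 : 0 < Real.sqrt x := by linarith
  have hlx : Real.log x ≤ (1/1000) * x ^ ε := by
    rw [Real.norm_eq_abs, Real.norm_eq_abs] at hl
    have h2 : Real.log x ≤ |Real.log x| := le_abs_self _
    have h3 : |x ^ ε| = x ^ ε := abs_of_nonneg (Real.rpow_nonneg hx0.le ε)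
    rw [h3] at hl
    linarith
  have hlogx0 : 0 ≤ Real.log x := Real.log_nonneg (by linarith)
  have hlog1 : Real.logb 2 (x + 1) ≤ 4 * Real.log x := by
    have h1 : Real.log (x + 1) ≤ 2 * Real.log x := by
      have h2 : Real.log (x + 1) ≤ Real.log (x ^ 2) := by
        apply Real.log_le_log (by linarith)
        nlinarith
      rwa [Real.log_pow, Nat.cast_ofNat] at h2
    have hl2 : (0.6931471803 : ℝ) < Real.log 2 := Real.log_two_gt_d9
    rw [Real.logb, div_le_iff₀ (by linarith)]
    nlinarith
  have hlogb0 : 0 ≤ Real.logb 2 (x + 1) := Real.logb_nonneg (by norm_num) (by linarith)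
  have hrpow : x ^ ((1 : ℝ) / 2 + ε) = Real.sqrt x * x ^ ε := by
    rw [Real.rpow_add hx0, Real.sqrt_eq_rpow]
  rw [hrpow]
  have he : (400 : ℝ) ≤ x ^ ε := hp
  have hlb : Real.logb 2 (x + 1) ≤ (1/250) * x ^ ε := by nlinarith
  nlinarith [mul_pos hs0 (lt_of_lt_of_le (by norm_num : (0:ℝ) < 400) he),
    mul_le_mul_of_nonneg_left hlb (by linarith : (0:ℝ) ≤ 12 * (Real.sqrt x + 5)),
    mul_le_mul_of_nonneg_right hs.le (by linarith : (0:ℝ) ≤ x ^ ε)]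

lemma counting (n : ℕ) (hn : 1 ≤ n) :
    ∃ S : Finset ℕ, (∀ q ∈ S, q.Prime ∧ Odd q) ∧ (n < ∑ q ∈ S, (q - 1)) ∧
      (∀ q ∈ S, (q : ℝ) ≤ 12 * (Real.sqrt n + 5) * (Real.logb 2 ((n : ℝ) + 1) + 7)) := by
  set s := Nat.sqrt n with hs
  set L := Nat.clog 2 (n + 1) with hL
  set u := 6 * (s + 5) * (L + 6) with hu
  have hu4 : 4 ≤ u := by
    have h56 : 6 * 5 * 6 ≤ 6 * (s + 5) * (L + 6) :=
      Nat.mul_le_mul (Nat.mul_le_mul le_rfl (by omega)) (by omega)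
    omega
  have hL1 : 1 ≤ L := Nat.clog_pos one_lt_two (by omega)
  have h2L : n + 1 ≤ 2 ^ L := Nat.le_pow_clog one_lt_two _
  set b := Nat.clog 2 (2 * u + 1) with hb
  have hA : 2 ≤ 2 ^ L := by
    calc 2 = 2 ^ 1 := rfl
      _ ≤ 2 ^ L := Nat.pow_le_pow_right (by norm_num) hL1
  have hble : b ≤ 4 * (L + 6) := by
    rw [hb, Nat.clog_le_iff_le_pow one_lt_two]
    have hs8 : s + 5 ≤ 8 * 2 ^ L := by
      have h1 : s ≤ n := Nat.sqrt_le_self n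
      omega
    have hl8 : L + 6 ≤ 8 * 2 ^ L := by
      have := Nat.lt_two_pow_self (n := L)
      omega
    have hpow : 2 ^ (4 * (L + 6)) = 16777216 * ((2 ^ L) ^ 2) ^ 2 := by
      rw [show 4 * (L + 6) = L * 4 + 24 by ring, pow_add, pow_mul]
      norm_num
      ring
    have hprod : (s + 5) * (L + 6) ≤ 64 * (2 ^ L) ^ 2 := by
      calc (s + 5) * (L + 6) ≤ (8 * 2 ^ L) * (8 * 2 ^ L) := Nat.mul_le_mul hs8 hl8
        _ = 64 * (2 ^ L) ^ 2 := by ring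
    have hY4 : 4 ≤ (2 ^ L) ^ 2 := by nlinarith [hA]
    rw [hpow, hu]
    nlinarith [hprod, hY4]
  have hcc := chebyshev_count u hu4
  set P := (Finset.range (2 * u + 1)).filter Nat.Prime with hP
  have hcard : 3 * (s + 5) ≤ P.card + 1 := by
    have h' : (4 * (L + 6)) * (3 * (s + 5)) ≤ (4 * (L + 6)) * (P.card + 1) := by
      calc (4 * (L + 6)) * (3 * (s + 5)) = 2 * u := by rw [hu]; ring
        _ ≤ (P.card + 1) * b := hcc
        _ ≤ (P.card + 1) * (4 * (L + 6)) := Nat.mul_le_mul_left _ hble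
        _ = (4 * (L + 6)) * (P.card + 1) := by ring
    exact Nat.le_of_mul_le_mul_left h' (by positivity)
  set S := (Finset.range (2 * u + 1)).filter (fun q => q.Prime ∧ Odd q) with hS
  have hPS : P.card ≤ S.card + 1 := by
    have hsub : P ⊆ insert 2 S := by
      intro q hq
      rw [hP, Finset.mem_filter] at hq
      rcases eq_or_ne q 2 with rfl | hne
      · exact Finset.mem_insert_self _ _
      · refine Finset.mem_insert_of_mem ?_
        rw [hS, Finset.mem_filter]
        exact ⟨hq.1, hq.2, hq.2.odd_of_ne_two hne⟩
    calc P.card ≤ (insert 2 S).card := Finset.card_le_card hsub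
      _ ≤ S.card + 1 := Finset.card_insert_le _ _
  have hNs : 2 * s + 7 ≤ S.card := by omega
  refine ⟨S, ?_, ?_, ?_⟩
  · intro q hq
    rw [hS, Finset.mem_filter] at hq
    exact hq.2
  · -- sum bound
    have hsum1 : ∑ i ∈ Finset.range S.card, i ≤ ∑ q ∈ S, q := sum_range_card_le S
    have hsum2 : (∑ i ∈ Finset.range S.card, i) * 2 = S.card * (S.card - 1) :=
      Finset.sum_range_id_mul_two _
    have hea : (∑ q ∈ S, (q - 1)) + S.card = ∑ q ∈ S, q := by
      rw [Finset.card_eq_sum_ones, ← Finset.sum_add_distrib]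
      refine Finset.sum_congr rfl fun q hq => ?_
      rw [hS, Finset.mem_filter] at hq
      have := hq.2.1.two_le
      omega
    set N := S.card with hN
    set A := N * (N - 3) with hAA
    set B := N * (N - 1) with hBB
    have hmm : (2 * s + 7) * (2 * s + 4) ≤ A := by
      rw [hAA]
      exact Nat.mul_le_mul hNs (by omega)
    have hexp : B = A + N * 2 := by
      rw [hAA, hBB, show N - 1 = (N - 3) + 2 by omega, Nat.mul_add]
    have hsq : n < (s + 1) * (s + 1) := by
      have := Nat.lt_succ_sqrt' n
      rw [Nat.succ_eq_add_one, pow_two] at this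
      exact this
    have hfin : (2 * s + 7) * (2 * s + 4) = 4 * (s * s) + 22 * s + 28 := by ring
    have hfin2 : (s + 1) * (s + 1) = s * s + 2 * s + 1 := by ring
    set ss := s * s with hss
    omega
  · intro q hq
    rw [hS, Finset.mem_filter, Finset.mem_range] at hq
    have hq2u : (q : ℝ) ≤ (2 * u : ℕ) := by exact_mod_cast Nat.le_of_lt_succ hq.1
    have hsR : (s : ℝ) ≤ Real.sqrt n := by
      rw [show (n:ℝ) = ((n:ℕ):ℝ) from rfl]
      have h0 : s * s ≤ n := by
        have := Nat.sqrt_le' n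
        rw [pow_two] at this
        exact this
      have h1 : ((s * s : ℕ) : ℝ) ≤ ((n : ℕ) : ℝ) := by exact_mod_cast h0
      have h2 : Real.sqrt ((s*s : ℕ) : ℝ) ≤ Real.sqrt n := Real.sqrt_le_sqrt h1
      rwa [show ((s*s : ℕ) : ℝ) = (s:ℝ)^2 by push_cast; ring, Real.sqrt_sq (by positivity)] at h2
    have hLR : (L : ℝ) ≤ Real.logb 2 ((n : ℝ) + 1) + 1 := by
      have h1 : (2 : ℕ) ^ (L - 1) < n + 1 := Nat.pow_pred_clog_lt_self one_lt_two (by omega)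
      have h2 : ((2:ℝ)) ^ ((L - 1 : ℕ) : ℝ) < (n : ℝ) + 1 := by
        rw [Real.rpow_natCast]
        exact_mod_cast h1
      have h3 : ((L - 1 : ℕ) : ℝ) < Real.logb 2 ((n:ℝ) + 1) :=
        (Real.lt_logb_iff_rpow_lt (by norm_num) (by positivity)).2 h2
      have h4 : ((L - 1 : ℕ) : ℝ) = (L : ℝ) - 1 := by
        have : 1 ≤ L := hL1
        push_cast [this]
        ring
      linarith [h3, h4.le, h4.ge]
    have h2ueq : ((2 * u : ℕ) : ℝ) = 12 * ((s:ℝ) + 5) * ((L:ℝ) + 6) := by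
      rw [hu]
      push_cast
      ring
    have hsqrtnn : (0:ℝ) ≤ Real.sqrt n := Real.sqrt_nonneg _
    have hlogbnn : (0:ℝ) ≤ Real.logb 2 ((n:ℝ) + 1) := by
      apply Real.logb_nonneg (by norm_num)
      have : (1:ℝ) ≤ n := by exact_mod_cast hn
      linarith
    calc (q : ℝ) ≤ ((2 * u : ℕ) : ℝ) := hq2u
      _ = 12 * ((s:ℝ) + 5) * ((L:ℝ) + 6) := h2ueq
      _ ≤ 12 * (Real.sqrt n + 5) * (Real.logb 2 ((n:ℝ) + 1) + 7) := by
          apply mul_le_mul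
          · linarith
          · linarith
          · positivity
          · positivity

/-- Fix `ε > 0`. There is a constant `c > 0` such that for any `n > 0`,
exponents `0 ≤ l₁ < ⋯ < l_k ≤ n` pairwise distinct mod `m₀`, and `f ∈ ℤ[X]` of degree
`≤ n` not in `M = ℤX^{l₁} + ⋯ + ℤX^{l_k}`, there is an odd prime `q < c·n^{1/2+ε}`
with `f ∉ M + ⟨X^{lcm(q,m₀)} - 1⟩`. -/
theorem stmt_18 (ε : ℝ) (hε : 0 < ε) :
    ∃ c : ℝ, 0 < c ∧ ∀ n : ℕ, 0 < n → ∀ (k : ℕ) (l : Fin k → ℕ),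
      StrictMono l → (∀ i, l i ≤ n) → ∀ m₀ : ℤ,
      (∀ i j, i ≠ j → ¬ ((l i : ℤ) ≡ (l j : ℤ) [ZMOD m₀])) →
      ∀ f : Polynomial ℤ, f.natDegree ≤ n →
      f ∉ Submodule.span ℤ (Set.range fun i => (Polynomial.X : Polynomial ℤ) ^ (l i)) →
      ∃ q : ℕ, q.Prime ∧ Odd q ∧ (q : ℝ) < c * (n : ℝ) ^ ((1 : ℝ) / 2 + ε) ∧
        f ∉ Submodule.span ℤ (Set.range fun i => (Polynomial.X : Polynomial ℤ) ^ (l i)) ⊔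
          (Ideal.span {(Polynomial.X : Polynomial ℤ) ^ (Int.lcm (q : ℤ) m₀) - 1}).restrictScalars ℤ := by
  obtain ⟨x₀, hx₀⟩ := Filter.eventually_atTop.1 (eventually_real_bound ε hε)
  set n₀ : ℕ := ⌈x₀⌉₊ + 2 with hn₀
  refine ⟨max 4 (2 * (n₀ : ℝ) + 4), by positivity, ?_⟩
  intro n hn k l hmono hle m₀ hdist f hdeg hfM
  set c := max 4 (2 * (n₀ : ℝ) + 4) with hc
  have hc4 : (4 : ℝ) ≤ c := le_max_left _ _
  have hcn₀ : 2 * (n₀ : ℝ) + 4 ≤ c := le_max_right _ _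
  have hrpow1 : (1 : ℝ) ≤ (n : ℝ) ^ ((1 : ℝ) / 2 + ε) := by
    have h1 : (1:ℝ) ≤ (n:ℝ) := by exact_mod_cast hn
    calc (1:ℝ) = 1 ^ ((1:ℝ)/2 + ε) := (Real.one_rpow _).symm
      _ ≤ (n:ℝ) ^ ((1:ℝ)/2 + ε) := Real.rpow_le_rpow (by norm_num) h1 (by linarith)
  rcases eq_or_ne m₀ 0 with rfl | hm₀
  · -- m₀ = 0 : the ideal is zero
    refine ⟨3, by norm_num, by decide, ?_, ?_⟩
    · calc (3:ℝ) < 4 * 1 := by norm_num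
        _ ≤ c * (n : ℝ) ^ ((1 : ℝ) / 2 + ε) :=
          mul_le_mul hc4 hrpow1 (by norm_num) (by linarith)
    · have hl0 : Int.lcm ((3:ℕ) : ℤ) (0 : ℤ) = 0 := by simp [Int.lcm]
      rw [hl0, pow_zero, sub_self]
      have : (Ideal.span {(0 : Polynomial ℤ)}).restrictScalars ℤ = ⊥ := by
        rw [Ideal.span_singleton_eq_bot.2 rfl]
        rfl
      rw [this, sup_bot_eq]
      exact hfM
  · -- m₀ ≠ 0
    set m : ℕ := m₀.natAbs with hm
    have hm1 : 1 ≤ m := Int.natAbs_pos.2 hm₀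
    have hinj : Function.Injective fun i => ((l i : ℤ) : ZMod m) := by
      intro i j hij
      by_contra hne
      apply hdist i j hne
      have h1 : ((l i : ℤ) : ZMod m) = ((l j : ℤ) : ZMod m) := hij
      have h2 : (l i : ℤ) ≡ (l j : ℤ) [ZMOD (m : ℤ)] := (ZMod.intCast_eq_intCast_iff _ _ _).1 h1
      have h3 : (m : ℤ) ∣ (l j : ℤ) - (l i : ℤ) := Int.ModEq.dvd h2
      have h4 : m₀ ∣ (l j : ℤ) - (l i : ℤ) := by
        rwa [hm, Int.natAbs_dvd] at h3
      exact Int.modEq_iff_dvd.mpr h4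
    have hlcm : ∀ q : ℕ, Int.lcm (q : ℤ) m₀ = Nat.lcm q m := by
      intro q
      simp [Int.lcm, hm]
    by_cases hsmall : n < n₀
    · -- small n : Bertrand
      have hqex : ∃ q : ℕ, q.Prime ∧ Odd q ∧ n < q ∧ q ≤ 2 * n₀ := by
        rcases eq_or_lt_of_le (show 1 ≤ n from hn) with h1 | h2
        · refine ⟨3, by norm_num, by decide, by omega, by omega⟩
        · obtain ⟨p, pp, hp1, hp2⟩ := Nat.exists_prime_lt_and_le_two_mul n (by omega)
          refine ⟨p, pp, pp.odd_of_ne_two (by omega), hp1, by omega⟩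
      obtain ⟨q, hq, hqodd, hq1, hq2⟩ := hqex
      refine ⟨q, hq, hqodd, ?_, ?_⟩
      · calc (q : ℝ) ≤ 2 * (n₀ : ℝ) := by exact_mod_cast hq2
          _ < 2 * (n₀ : ℝ) + 4 := by linarith
          _ ≤ c := hcn₀
          _ = c * 1 := (mul_one c).symm
          _ ≤ c * (n : ℝ) ^ ((1 : ℝ) / 2 + ε) :=
            mul_le_mul_of_nonneg_left hrpow1 (by linarith)
      · apply not_mem_sup_of_big n k l hle f hdeg hfM
        have h1 : q ∣ Int.lcm (q : ℤ) m₀ := by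
          rw [hlcm]
          exact Nat.dvd_lcm_left _ _
        have h2 : Int.lcm (q : ℤ) m₀ ≠ 0 := by
          rw [hlcm]
          exact Nat.lcm_ne_zero (by omega) (by omega)
        have h3 : q ≤ Int.lcm (q : ℤ) m₀ := Nat.le_of_dvd (Nat.pos_of_ne_zero h2) h1
        omega
    · -- large n : many primes
      push_neg at hsmall
      obtain ⟨S, hSpo, hSsum, hSbd⟩ := counting n hn
      have hx₀n : x₀ ≤ (n : ℝ) := by
        have h1 : (⌈x₀⌉₊ : ℝ) ≤ (n : ℝ) := by exact_mod_cast le_trans (by omega) hsmall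
        exact le_trans (Nat.le_ceil x₀) h1
      have hreal := hx₀ (n : ℝ) hx₀n
      by_contra hcon
      push_neg at hcon
      have hall : ∀ q ∈ S, f ∈ Submodule.span ℤ (Set.range fun i => (Polynomial.X : Polynomial ℤ) ^ (l i)) ⊔
          (Ideal.span {(Polynomial.X : Polynomial ℤ) ^ (Int.lcm (q : ℤ) m₀) - 1}).restrictScalars ℤ := by
        intro q hq
        by_contra hnot
        obtain ⟨hqp, hqo⟩ := hSpo q hq
        have hbd : (q : ℝ) < c * (n : ℝ) ^ ((1 : ℝ) / 2 + ε ) := by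
          calc (q : ℝ) ≤ 12 * (Real.sqrt n + 5) * (Real.logb 2 ((n : ℝ) + 1) + 7) := hSbd q hq
            _ < (n : ℝ) ^ ((1 : ℝ) / 2 + ε) := hreal
            _ = 1 * (n : ℝ) ^ ((1 : ℝ) / 2 + ε) := (one_mul _).symm
            _ ≤ c * (n : ℝ) ^ ((1 : ℝ) / 2 + ε) :=
              mul_le_mul_of_nonneg_right (by linarith) (by linarith)
        exact hnot (hcon q hqp hqo hbd)
      -- decompose
      have hdecomp : ∀ q ∈ S, ∃ g ∈ Submodule.span ℤ (Set.range fun i => (Polynomial.X : Polynomial ℤ) ^ (l i)),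
          ((Polynomial.X : Polynomial ℤ) ^ (Int.lcm (q : ℤ) m₀) - 1) ∣ (f - g) := by
        intro q hq
        have := hall q hq
        rw [Submodule.mem_sup] at this
        obtain ⟨g, hg, h, hh, hgh⟩ := this
        rw [Submodule.restrictScalars_mem, Ideal.mem_span_singleton] at hh
        refine ⟨g, hg, ?_⟩
        have : f - g = h := by rw [← hgh]; ring
        rwa [this]
      choose g hgM hgdvd using hdecomp
      have hSne : S.Nonempty := by
        rcases S.eq_empty_or_nonempty with rfl | hne
        · rw [Finset.sum_empty] at hSsum; omega
        · exact hne
      obtain ⟨q₁, hq₁⟩ := hSne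
      have hmdvd : ∀ q ∈ S, ((Polynomial.X : Polynomial ℤ) ^ m - 1) ∣
          ((Polynomial.X : Polynomial ℤ) ^ (Int.lcm (q : ℤ) m₀) - 1) := by
        intro q hq
        obtain ⟨t, ht⟩ : m ∣ Int.lcm (q : ℤ) m₀ := by
          rw [hlcm]
          exact Nat.dvd_lcm_right _ _
        have he : ((Polynomial.X : Polynomial ℤ) ^ (Int.lcm (q : ℤ) m₀) - 1)
            = ((Polynomial.X : Polynomial ℤ) ^ m) ^ t - 1 ^ t := by
          rw [← pow_mul, ← ht, one_pow]
        rw [he]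
        exact sub_dvd_pow_sub_pow _ _ _
      have hgeq : ∀ q (hq : q ∈ S), g q hq = g q₁ hq₁ := by
        intro q hq
        have hd1 : ((Polynomial.X : Polynomial ℤ) ^ m - 1) ∣ (f - g q hq) :=
          dvd_trans (hmdvd q hq) (hgdvd q hq)
        have hd2 : ((Polynomial.X : Polynomial ℤ) ^ m - 1) ∣ (f - g q₁ hq₁) :=
          dvd_trans (hmdvd q₁ hq₁) (hgdvd q₁ hq₁)
        have hd3 : ((Polynomial.X : Polynomial ℤ) ^ m - 1) ∣ (g q hq - g q₁ hq₁) := by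
          have := dvd_sub hd2 hd1
          have he : (f - g q₁ hq₁) - (f - g q hq) = g q hq - g q₁ hq₁ := by ring
          rwa [he] at this
        have hmem : g q hq - g q₁ hq₁ ∈
            Submodule.span ℤ (Set.range fun i => (Polynomial.X : Polynomial ℤ) ^ (l i)) :=
          Submodule.sub_mem _ (hgM q hq) (hgM q₁ hq₁)
        have := span_inj m k l hinj _ hmem hd3
        have := sub_eq_zero.1 this
        exact this
      have hGne : f - g q₁ hq₁ ≠ 0 := by
        intro hzero
        exact hfM (sub_eq_zero.1 hzero ▸ hgM q₁ hq₁)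
      have hGdeg : (f - g q₁ hq₁).natDegree ≤ n := by
        have h1 : (g q₁ hq₁).natDegree ≤ n := span_natDegree_le n k l hle _ (hgM q₁ hq₁)
        exact le_trans (Polynomial.natDegree_sub_le f (g q₁ hq₁)) (by omega)
      have hbound := roots_degree_bound n (f - g q₁ hq₁) hGne hGdeg S (fun q hq => (hSpo q hq).1)
        (fun q => Int.lcm (q : ℤ) m₀)
        (fun q hq => by show q ∣ Int.lcm (q : ℤ) m₀; rw [hlcm]; exact Nat.dvd_lcm_left _ _)
        (fun q hq => by
          show ((Polynomial.X : Polynomial ℤ) ^ (Int.lcm (q : ℤ) m₀) - 1) ∣ (f - g q₁ hq₁)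
          rw [← hgeq q hq]; exact hgdvd q hq)
      omega
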